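/- Fix an integer k ≥ 2 and let e_{ij} (1 ≤ i, j ≤ k) denote the standard matrix units of the complex matrix algebra M_k(ℂ). For t ∈ ℝ define u_t ∈ M_k(ℂ) ⊗ M_k(ℂ) (Kronecker product) by u_t = Σ_i e_{ii} ⊗ e_{ii} + Σ_{i<j} [cos(πt/2)(e_{ii} ⊗ e_{jj} + e_{jj} ⊗ e_{ii}) + sin(πt/2)(e_{ij} ⊗ e_{ji} − e_{ji} ⊗ e_{ij})]. Then: (i) u₀ = 1 and u_s · u_t = u_{s+t} for all s, t ∈ ℝ; (ii) each u_t is unitary, i.e. u_t u_t* = u_t* u_t = 1; (iii) u_t commutes with D ⊗ D for every diagonal matrix D ∈ M_k(ℂ), so that conjugation by u_t preserves any product state φ₀ ⊗ φ₀ whose density matrix is diagonal; and (iv) u₁ (e_{ii} ⊗ 1) u₁* = 1 ⊗ e_{ii} for every i. -/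

import Mathlib

open Matrix Kronecker

/-- The standard matrix units of `M_k(ℂ)`. -/
noncomputable def matUnit (k : ℕ) (i j : Fin k) : Matrix (Fin k) (Fin k) ℂ :=
  Matrix.single i j 1

/-- The one-parameter family
`u_t = Σ_i e_{ii} ⊗ e_{ii} + Σ_{i<j} [cos(πt/2)(e_{ii} ⊗ e_{jj} + e_{jj} ⊗ e_{ii})
      + sin(πt/2)(e_{ij} ⊗ e_{ji} − e_{ji} ⊗ e_{ij})]` in `M_k(ℂ) ⊗ M_k(ℂ)`. -/
noncomputable def gaugeUnitary (k : ℕ) (t : ℝ) :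
    Matrix (Fin k × Fin k) (Fin k × Fin k) ℂ :=
  (∑ i : Fin k, matUnit k i i ⊗ₖ matUnit k i i) +
    ∑ i : Fin k, ∑ j : Fin k,
      if i < j then
        ((Real.cos (Real.pi * t / 2) : ℂ) •
            (matUnit k i i ⊗ₖ matUnit k j j + matUnit k j j ⊗ₖ matUnit k i i) +
          (Real.sin (Real.pi * t / 2) : ℂ) •
            (matUnit k i j ⊗ₖ matUnit k j i - matUnit k j i ⊗ₖ matUnit k i j))
      else 0

noncomputable def eps {k : ℕ} (p : Fin k × Fin k) : ℂ := if p.1 < p.2 then 1 else -1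

noncomputable def gEntry (k : ℕ) (t : ℝ) (p q : Fin k × Fin k) : ℂ :=
  if q = p then (if p.1 = p.2 then 1 else (Real.cos (Real.pi * t / 2) : ℂ))
  else if q = (p.2, p.1) then eps p * (Real.sin (Real.pi * t / 2) : ℂ)
  else 0

lemma matUnit_apply (k : ℕ) (i j a b : Fin k) :
    matUnit k i j a b = if i = a ∧ j = b then 1 else 0 := by
  simp [matUnit, Matrix.single]

set_option maxHeartbeats 1000000 in
set_option maxRecDepth 8000 in
lemma gaugeUnitary_apply (k : ℕ) (t : ℝ) (p q : Fin k × Fin k) :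
    gaugeUnitary k t p q = gEntry k t p q := by
  obtain ⟨a, b⟩ := p
  obtain ⟨c, d⟩ := q
  simp only [gaugeUnitary, gEntry, Matrix.add_apply, Matrix.sum_apply,
    apply_ite (fun M : Matrix (Fin k × Fin k) (Fin k × Fin k) ℂ => M (a, b) (c, d)),
    Matrix.kroneckerMap_apply, matUnit_apply, Matrix.sub_apply, Matrix.smul_apply,
    Matrix.zero_apply, smul_eq_mul, eps]
  simp only [ite_and, mul_ite, ite_mul, mul_one, mul_zero, zero_mul, one_mul, mul_neg,
    Finset.sum_ite_eq, Finset.sum_ite_eq', Finset.sum_ite_eq', Finset.sum_ite_eq, Finset.mem_univ, if_true]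
  have key : ∀ x y : Fin k,
      (if x < y then
        (Real.cos (Real.pi * t / 2) : ℂ) *
            ((if y = b then if y = d then if x = a then if x = c then 1 else 0 else 0 else 0 else 0) +
              if x = b then if x = d then if y = a then if y = c then 1 else 0 else 0 else 0 else 0) +
          (Real.sin (Real.pi * t / 2) : ℂ) *
            ((if y = b then if x = d then if x = a then if y = c then 1 else 0 else 0 else 0 else 0) -
              if x = b then if y = d then if y = a then if x = c then 1 else 0 else 0 else 0 else 0)
      else 0) =
      (if y = b then if x = a then
        (if x < y then
          (Real.cos (Real.pi * t / 2) : ℂ) * (if y = d then if x = c then 1 else 0 else 0) +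
          (Real.sin (Real.pi * t / 2) : ℂ) * (if x = d then if y = c then 1 else 0 else 0)
         else 0) else 0 else 0) +
      (if y = a then if x = b then
        (if x < y then
          (Real.cos (Real.pi * t / 2) : ℂ) * (if x = d then if y = c then 1 else 0 else 0) -
          (Real.sin (Real.pi * t / 2) : ℂ) * (if y = d then if x = c then 1 else 0 else 0)
         else 0) else 0 else 0) := by
    intro x y
    split_ifs <;> ring1
  simp only [key, Finset.sum_add_distrib, Finset.sum_ite_eq', Finset.sum_ite_eq, Finset.mem_univ, if_true]
  clear key
  simp only [Prod.mk.injEq]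
  split_ifs <;>
    first
      | ring1
      | (exfalso; simp only [Fin.ext_iff, Fin.lt_iff_val_lt_val, not_and, and_imp] at *; omega)

lemma eps_sq {k : ℕ} (p : Fin k × Fin k) : eps p * eps p = 1 := by
  unfold eps; split_ifs <;> ring

lemma eps_swap {k : ℕ} (p : Fin k × Fin k) (h : p.1 ≠ p.2) :
    eps ((p.2, p.1) : Fin k × Fin k) = -eps p := by
  unfold eps
  rcases lt_trichotomy p.1 p.2 with h1 | h1 | h1
  · simp [h1, asymm h1]
  · exact absurd h1 h
  · simp [h1, asymm h1]

lemma sum_support_pair {α : Type*} [Fintype α] [DecidableEq α] (f : α → ℂ) (a b : α)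
    (hab : a ≠ b) (h : ∀ r, r ≠ a → r ≠ b → f r = 0) : ∑ r, f r = f a + f b := by
  rw [← Finset.sum_pair hab]
  refine (Finset.sum_subset (Finset.subset_univ _) ?_).symm
  intro r _ hr
  simp only [Finset.mem_insert, Finset.mem_singleton, not_or] at hr
  exact h r hr.1 hr.2

lemma gaugeU_mul_apply (k : ℕ) (t : ℝ) (M : Matrix (Fin k × Fin k) (Fin k × Fin k) ℂ)
    (p q : Fin k × Fin k) :
    (gaugeUnitary k t * M) p q =
      if p.1 = p.2 then M p q
      else (Real.cos (Real.pi * t / 2) : ℂ) * M p q +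
        eps p * (Real.sin (Real.pi * t / 2) : ℂ) * M (p.2, p.1) q := by
  rw [Matrix.mul_apply]
  by_cases h : p.1 = p.2
  · have row : ∀ r : Fin k × Fin k, gaugeUnitary k t p r = if r = p then 1 else 0 := by
      intro r
      rw [gaugeUnitary_apply]
      unfold gEntry
      obtain ⟨a, b⟩ := p
      obtain ⟨x, y⟩ := r
      simp only [Prod.mk.injEq] at h ⊢
      split_ifs <;> first | rfl | ring1 | (exfalso; simp only [Fin.ext_iff, Fin.lt_iff_val_lt_val, not_and] at *; omega)
    simp only [row, ite_mul, one_mul, zero_mul, Finset.sum_ite_eq, Finset.sum_ite_eq', Finset.sum_ite_eq, Finset.mem_univ, if_true,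
      if_pos h]
  · have row : ∀ r : Fin k × Fin k, gaugeUnitary k t p r =
        (if r = p then (Real.cos (Real.pi * t / 2) : ℂ) else 0) +
        (if r = (p.2, p.1) then eps p * (Real.sin (Real.pi * t / 2) : ℂ) else 0) := by
      intro r
      rw [gaugeUnitary_apply]
      unfold gEntry eps
      obtain ⟨a, b⟩ := p
      obtain ⟨x, y⟩ := r
      simp only [Prod.mk.injEq] at h ⊢
      split_ifs <;> first | rfl | ring1 | (exfalso; simp only [Fin.ext_iff, Fin.lt_iff_val_lt_val, not_and] at *; omega)
    simp only [row, ite_mul, zero_mul, add_mul, Finset.sum_add_distrib, Finset.sum_ite_eq, Finset.sum_ite_eq',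
      Finset.mem_univ, if_true, if_neg h]

lemma gaugeU_mul_gauge_apply (k : ℕ) (t : ℝ) (M : Matrix (Fin k × Fin k) (Fin k × Fin k) ℂ)
    (p q : Fin k × Fin k) :
    (M * gaugeUnitary k t) p q =
      if q.1 = q.2 then M p q
      else (Real.cos (Real.pi * t / 2) : ℂ) * M p q -
        eps q * (Real.sin (Real.pi * t / 2) : ℂ) * M p (q.2, q.1) := by
  rw [Matrix.mul_apply]
  by_cases h : q.1 = q.2
  · have col : ∀ r : Fin k × Fin k, gaugeUnitary k t r q = if r = q then 1 else 0 := by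
      intro r
      rw [gaugeUnitary_apply]
      unfold gEntry
      obtain ⟨a, b⟩ := r
      obtain ⟨x, y⟩ := q
      simp only [Prod.mk.injEq] at h ⊢
      split_ifs <;> first | rfl | ring1 | (exfalso; simp only [Fin.ext_iff, Fin.lt_iff_val_lt_val, not_and] at *; omega)
    simp only [col, mul_ite, mul_one, mul_zero, Finset.sum_ite_eq', Finset.sum_ite_eq, Finset.mem_univ, if_true,
      if_pos h]
  · have col : ∀ r : Fin k × Fin k, gaugeUnitary k t r q =
        (if r = q then (Real.cos (Real.pi * t / 2) : ℂ) else 0) +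
        (if r = (q.2, q.1) then -eps q * (Real.sin (Real.pi * t / 2) : ℂ) else 0) := by
      intro r
      rw [gaugeUnitary_apply]
      unfold gEntry eps
      obtain ⟨a, b⟩ := r
      obtain ⟨x, y⟩ := q
      simp only [Prod.mk.injEq] at h ⊢
      split_ifs <;> first | rfl | ring1 | (exfalso; simp only [Fin.ext_iff, Fin.lt_iff_val_lt_val, not_and] at *; omega)
    simp only [col, mul_ite, mul_zero, mul_add, Finset.sum_add_distrib, Finset.sum_ite_eq',
      Finset.mem_univ, if_true, if_neg h]
    ring

lemma cosC (s t : ℝ) : (Real.cos (Real.pi * (s + t) / 2) : ℂ) =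
    (Real.cos (Real.pi * s / 2) : ℂ) * (Real.cos (Real.pi * t / 2) : ℂ) -
    (Real.sin (Real.pi * s / 2) : ℂ) * (Real.sin (Real.pi * t / 2) : ℂ) := by
  rw [show Real.pi * (s + t) / 2 = Real.pi * s / 2 + Real.pi * t / 2 from by ring, Real.cos_add]
  push_cast; ring

lemma sinC (s t : ℝ) : (Real.sin (Real.pi * (s + t) / 2) : ℂ) =
    (Real.sin (Real.pi * s / 2) : ℂ) * (Real.cos (Real.pi * t / 2) : ℂ) +
    (Real.cos (Real.pi * s / 2) : ℂ) * (Real.sin (Real.pi * t / 2) : ℂ) := by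
  rw [show Real.pi * (s + t) / 2 = Real.pi * s / 2 + Real.pi * t / 2 from by ring, Real.sin_add]
  push_cast; ring

lemma gaugeU_zero (k : ℕ) : gaugeUnitary k 0 = 1 := by
  ext p q
  rw [gaugeUnitary_apply, Matrix.one_apply]
  unfold gEntry eps
  obtain ⟨a, b⟩ := p
  obtain ⟨x, y⟩ := q
  simp only [Prod.mk.injEq, mul_zero, Real.cos_zero, Real.sin_zero]
  norm_num
  split_ifs <;> first | rfl | ring1 | (exfalso; simp only [Fin.ext_iff, Fin.lt_iff_val_lt_val, not_and] at *; omega)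

set_option maxHeartbeats 1000000 in
lemma gaugeU_group (k : ℕ) (s t : ℝ) :
    gaugeUnitary k s * gaugeUnitary k t = gaugeUnitary k (s + t) := by
  ext p q
  rw [gaugeU_mul_apply]
  simp only [gaugeUnitary_apply]
  unfold gEntry eps
  obtain ⟨a, b⟩ := p
  obtain ⟨x, y⟩ := q
  dsimp only
  simp only [Prod.mk.injEq]
  split_ifs <;>
    first
      | rfl
      | ring1
      | (rw [cosC]; ring1)
      | (rw [sinC]; ring1)
      | (exfalso; simp only [Fin.ext_iff, Fin.lt_iff_val_lt_val, not_and] at *; omega)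

set_option maxHeartbeats 1000000 in
lemma gaugeU_conjT (k : ℕ) (t : ℝ) : (gaugeUnitary k t)ᴴ = gaugeUnitary k (-t) := by
  have hcos : Real.cos (Real.pi * (-t) / 2) = Real.cos (Real.pi * t / 2) := by
    rw [show Real.pi * (-t) / 2 = -(Real.pi * t / 2) from by ring, Real.cos_neg]
  have hsin : Real.sin (Real.pi * (-t) / 2) = -Real.sin (Real.pi * t / 2) := by
    rw [show Real.pi * (-t) / 2 = -(Real.pi * t / 2) from by ring, Real.sin_neg]
  ext p q
  rw [Matrix.conjTranspose_apply, gaugeUnitary_apply, gaugeUnitary_apply]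
  unfold gEntry eps
  obtain ⟨a, b⟩ := p
  obtain ⟨x, y⟩ := q
  dsimp only
  simp only [Prod.mk.injEq, hcos, hsin, Complex.ofReal_neg]
  split_ifs <;>
    first
      | (exfalso; simp only [Fin.ext_iff, Fin.lt_iff_val_lt_val, not_and] at *; omega)
      | rfl
      | ring1
      | (simp only [Complex.star_def, _root_.map_mul, _root_.map_one, _root_.map_neg, _root_.map_zero,
          Complex.conj_ofReal, star_one, star_zero]; ring1)
      | (simp only [Complex.star_def, _root_.map_mul, _root_.map_one, _root_.map_neg, _root_.map_zero,
          Complex.conj_ofReal, star_one, star_zero])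

lemma gaugeU_comm (k : ℕ) (t : ℝ) (D : Matrix (Fin k) (Fin k) ℂ) (hD : D.IsDiag) :
    gaugeUnitary k t * (D ⊗ₖ D) = (D ⊗ₖ D) * gaugeUnitary k t := by
  have hz : ∀ a x b y : Fin k, ¬(a = x ∧ b = y) → D a x * D b y = 0 := by
    intro a x b y h
    by_cases h1 : a = x
    · exact mul_eq_zero_of_right _ (hD (show b ≠ y from fun hy => h ⟨h1, hy⟩))
    · exact mul_eq_zero_of_left (hD h1) _
  ext p q
  rw [gaugeU_mul_apply, gaugeU_mul_gauge_apply]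
  obtain ⟨a, b⟩ := p
  obtain ⟨x, y⟩ := q
  dsimp only
  simp only [Matrix.kroneckerMap_apply]
  by_cases hab : a = b <;> by_cases hxy : x = y
  · rw [if_pos hab, if_pos hxy]
  · rw [if_pos hab, if_neg hxy]
    rw [show D a x * D b y = 0 from hz _ _ _ _ (by rintro ⟨rfl, rfl⟩; simp_all),
      show D a y * D b x = 0 from hz _ _ _ _ (by rintro ⟨rfl, rfl⟩; simp_all)]
    ring1
  · rw [if_neg hab, if_pos hxy]
    rw [show D a x * D b y = 0 from hz _ _ _ _ (by rintro ⟨rfl, rfl⟩; simp_all),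
      show D b x * D a y = 0 from hz _ _ _ _ (by rintro ⟨rfl, rfl⟩; simp_all)]
    ring1
  · rw [if_neg hab, if_neg hxy]
    by_cases h1 : b = x <;> by_cases h2 : a = y
    · subst h1; subst h2
      rw [show eps ((b, a) : Fin k × Fin k) = -eps ((a, b) : Fin k × Fin k) from
        eps_swap (a, b) hab]
      ring1
    · rw [show D b x * D a y = 0 from hz _ _ _ _ (by rintro ⟨rfl, rfl⟩; simp_all),
        show D a y * D b x = 0 from hz _ _ _ _ (by rintro ⟨rfl, rfl⟩; simp_all)]
      ring1
    · rw [show D b x * D a y = 0 from hz _ _ _ _ (by rintro ⟨rfl, rfl⟩; simp_all),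
        show D a y * D b x = 0 from hz _ _ _ _ (by rintro ⟨rfl, rfl⟩; simp_all)]
      ring1
    · rw [show D b x * D a y = 0 from hz _ _ _ _ (by rintro ⟨rfl, rfl⟩; simp_all),
        show D a y * D b x = 0 from hz _ _ _ _ (by rintro ⟨rfl, rfl⟩; simp_all)]
      ring1

set_option maxHeartbeats 1600000 in
lemma gaugeU_flip (k : ℕ) (i : Fin k) :
    gaugeUnitary k 1 * (matUnit k i i ⊗ₖ (1 : Matrix (Fin k) (Fin k) ℂ)) *
        (gaugeUnitary k 1)ᴴ =
      (1 : Matrix (Fin k) (Fin k) ℂ) ⊗ₖ matUnit k i i := by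
  rw [gaugeU_conjT]
  have hc1 : Real.cos (Real.pi * 1 / 2) = 0 := by rw [mul_one, Real.cos_pi_div_two]
  have hs1 : Real.sin (Real.pi * 1 / 2) = 1 := by rw [mul_one, Real.sin_pi_div_two]
  have hcm : Real.cos (Real.pi * (-1) / 2) = 0 := by
    rw [show Real.pi * (-1) / 2 = -(Real.pi / 2) from by ring, Real.cos_neg, Real.cos_pi_div_two]
  have hsm : Real.sin (Real.pi * (-1) / 2) = -1 := by
    rw [show Real.pi * (-1) / 2 = -(Real.pi / 2) from by ring, Real.sin_neg, Real.sin_pi_div_two]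
  ext p q
  rw [gaugeU_mul_gauge_apply, gaugeU_mul_apply, gaugeU_mul_apply]
  simp only [hc1, hs1, hcm, hsm, Complex.ofReal_zero, Complex.ofReal_one, Complex.ofReal_neg,
    Matrix.kroneckerMap_apply, matUnit_apply, Matrix.one_apply]
  obtain ⟨a, b⟩ := p
  obtain ⟨x, y⟩ := q
  dsimp only
  unfold eps
  simp only [Prod.mk.injEq]
  split_ifs <;>
    first
      | (exfalso; simp only [Fin.ext_iff, Fin.lt_iff_val_lt_val, not_and] at *; omega)
      | rfl
      | ring1

/-- Properties of the gauge unitaries `u_t`: they form a one-parameter unitary group,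
commute with `D ⊗ D` for diagonal `D`, and `u₁` flips the two tensor factors of the
diagonal matrix units. -/
theorem gaugeUnitary_properties (k : ℕ) (hk : 2 ≤ k) :
    (gaugeUnitary k 0 = 1 ∧
      ∀ s t : ℝ, gaugeUnitary k s * gaugeUnitary k t = gaugeUnitary k (s + t)) ∧
    (∀ t : ℝ, gaugeUnitary k t * (gaugeUnitary k t)ᴴ = 1 ∧
      (gaugeUnitary k t)ᴴ * gaugeUnitary k t = 1) ∧
    (∀ t : ℝ, ∀ D : Matrix (Fin k) (Fin k) ℂ, D.IsDiag →
      Commute (gaugeUnitary k t) (D ⊗ₖ D)) ∧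
    (∀ i : Fin k,
      gaugeUnitary k 1 * (matUnit k i i ⊗ₖ (1 : Matrix (Fin k) (Fin k) ℂ)) *
          (gaugeUnitary k 1)ᴴ =
        (1 : Matrix (Fin k) (Fin k) ℂ) ⊗ₖ matUnit k i i) := by
  refine ⟨⟨gaugeU_zero k, fun s t => gaugeU_group k s t⟩, fun t => ⟨?_, ?_⟩,
    fun t D hD => gaugeU_comm k t D hD, fun i => gaugeU_flip k i⟩
  · rw [gaugeU_conjT, gaugeU_group]
    rw [show t + -t = 0 from by ring, gaugeU_zero]
  · rw [gaugeU_conjT, gaugeU_group]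
    rw [show -t + t = 0 from by ring, gaugeU_zero]
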